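/- In a root system of type D_4 with simple roots α_1, α_2, α_3, α_4 (α_2 the branch node), the 12 positive roots are partitioned into exactly three quadruples of mutually orthogonal roots: {α_1+α_2, α_2+α_3, α_2+α_4, α_1+α_2+α_3+α_4}, {α_2, α_1+α_2+α_3, α_1+α_2+α_4, α_2+α_3+α_4}, and {α_1, α_3, α_4, α_1+2α_2+α_3+α_4}; moreover these are the only quadruples of mutually orthogonal positive roots. -/

import Mathlib

open scoped RealInnerProductSpace

/-- The 12 positive roots of `D₄` in terms of the simple roots. -/
def rvec {V : Type*} [AddCommGroup V] [Module ℝ V] (a : Fin 4 → V) : Fin 12 → V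
  | ⟨0, _⟩ => a 0
  | ⟨1, _⟩ => a 1
  | ⟨2, _⟩ => a 2
  | ⟨3, _⟩ => a 3
  | ⟨4, _⟩ => a 0 + a 1
  | ⟨5, _⟩ => a 1 + a 2
  | ⟨6, _⟩ => a 1 + a 3
  | ⟨7, _⟩ => a 0 + a 1 + a 2
  | ⟨8, _⟩ => a 0 + a 1 + a 3
  | ⟨9, _⟩ => a 1 + a 2 + a 3
  | ⟨10, _⟩ => a 0 + a 1 + a 2 + a 3
  | ⟨11, _⟩ => a 0 + (2 : ℝ) • a 1 + a 2 + a 3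

/-- Coefficients of the 12 positive roots w.r.t. the simple roots. -/
def Cf : Fin 12 → Fin 4 → ℤ
  | ⟨0, _⟩ => ![1, 0, 0, 0]
  | ⟨1, _⟩ => ![0, 1, 0, 0]
  | ⟨2, _⟩ => ![0, 0, 1, 0]
  | ⟨3, _⟩ => ![0, 0, 0, 1]
  | ⟨4, _⟩ => ![1, 1, 0, 0]
  | ⟨5, _⟩ => ![0, 1, 1, 0]
  | ⟨6, _⟩ => ![0, 1, 0, 1]
  | ⟨7, _⟩ => ![1, 1, 1, 0]
  | ⟨8, _⟩ => ![1, 1, 0, 1]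
  | ⟨9, _⟩ => ![0, 1, 1, 1]
  | ⟨10, _⟩ => ![1, 1, 1, 1]
  | ⟨11, _⟩ => ![1, 2, 1, 1]

/-- Gram matrix of the simple roots of `D₄`. -/
def gA : Fin 4 → Fin 4 → ℤ
  | ⟨0, _⟩, ⟨0, _⟩ => 2
  | ⟨0, _⟩, ⟨1, _⟩ => -1
  | ⟨0, _⟩, ⟨2, _⟩ => 0
  | ⟨0, _⟩, ⟨3, _⟩ => 0
  | ⟨1, _⟩, ⟨0, _⟩ => -1
  | ⟨1, _⟩, ⟨1, _⟩ => 2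
  | ⟨1, _⟩, ⟨2, _⟩ => -1
  | ⟨1, _⟩, ⟨3, _⟩ => -1
  | ⟨2, _⟩, ⟨0, _⟩ => 0
  | ⟨2, _⟩, ⟨1, _⟩ => -1
  | ⟨2, _⟩, ⟨2, _⟩ => 2
  | ⟨2, _⟩, ⟨3, _⟩ => 0
  | ⟨3, _⟩, ⟨0, _⟩ => 0
  | ⟨3, _⟩, ⟨1, _⟩ => -1
  | ⟨3, _⟩, ⟨2, _⟩ => 0
  | ⟨3, _⟩, ⟨3, _⟩ => 2

/-- Gram matrix of the 12 positive roots of `D₄`. -/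
def Gm : Fin 12 → Fin 12 → ℤ :=
  ![![2, -1, 0, 0, 1, -1, -1, 1, 1, -1, 1, 0],
    ![-1, 2, -1, -1, 1, 1, 1, 0, 0, 0, -1, 1],
    ![0, -1, 2, 0, -1, 1, -1, 1, -1, 1, 1, 0],
    ![0, -1, 0, 2, -1, -1, 1, -1, 1, 1, 1, 0],
    ![1, 1, -1, -1, 2, 0, 0, 1, 1, -1, 0, 1],
    ![-1, 1, 1, -1, 0, 2, 0, 1, -1, 1, 0, 1],
    ![-1, 1, -1, 1, 0, 0, 2, -1, 1, 1, 0, 1],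
    ![1, 0, 1, -1, 1, 1, -1, 2, 0, 0, 1, 1],
    ![1, 0, -1, 1, 1, -1, 1, 0, 2, 0, 1, 1],
    ![-1, 0, 1, 1, -1, 1, 1, 0, 0, 2, 1, 1],
    ![1, -1, 1, 1, 0, 0, 0, 1, 1, 1, 2, 1],
    ![0, 1, 0, 0, 1, 1, 1, 1, 1, 1, 1, 2]]

theorem Gm_eq_sum : ∀ k l : Fin 12, Gm k l = ∑ i, ∑ j, Cf k i * (Cf l j * gA i j) := by
  decide

theorem key (i1 i2 i3 i4 : Fin 12) (h12 : i1 ≠ i2) (h13 : i1 ≠ i3) (h14 : i1 ≠ i4)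
    (h23 : i2 ≠ i3) (h24 : i2 ≠ i4) (h34 : i3 ≠ i4)
    (o12 : Gm i1 i2 = 0) (o13 : Gm i1 i3 = 0) (o14 : Gm i1 i4 = 0)
    (o23 : Gm i2 i3 = 0) (o24 : Gm i2 i4 = 0) (o34 : Gm i3 i4 = 0) :
    ({i1, i2, i3, i4} : Finset (Fin 12)) = {4, 5, 6, 10} ∨
    ({i1, i2, i3, i4} : Finset (Fin 12)) = {1, 7, 8, 9} ∨
    ({i1, i2, i3, i4} : Finset (Fin 12)) = {0, 2, 3, 11} := by
  revert h12 h13 h14 h23 h24 h34 o12 o13 o14 o23 o24 o34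
  revert i1 i2 i3 i4
  decide

theorem keyne : ∀ k l : Fin 12, k ≠ l → ¬(Gm l l = Gm k l) := by decide

set_option maxHeartbeats 2000000 in
theorem stmt3 {V : Type*} [NormedAddCommGroup V] [InnerProductSpace ℝ V]
    (a : Fin 4 → V)
    (hnorm : ∀ i, ⟪a i, a i⟫ = (2 : ℝ))
    (hbranch : ∀ j, j ≠ 1 → ⟪a 1, a j⟫ = (-1 : ℝ))
    (hleaf : ∀ i j, i ≠ j → i ≠ 1 → j ≠ 1 → ⟪a i, a j⟫ = (0 : ℝ))
    (Φplus : Set V)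
    (hΦplus : Φplus = {a 0, a 1, a 2, a 3, a 0 + a 1, a 1 + a 2, a 1 + a 3,
      a 0 + a 1 + a 2, a 0 + a 1 + a 3, a 1 + a 2 + a 3,
      a 0 + a 1 + a 2 + a 3, a 0 + (2 : ℝ) • a 1 + a 2 + a 3})
    (Q1 Q2 Q3 : Set V)
    (hQ1 : Q1 = {a 0 + a 1, a 1 + a 2, a 1 + a 3, a 0 + a 1 + a 2 + a 3})
    (hQ2 : Q2 = {a 1, a 0 + a 1 + a 2, a 0 + a 1 + a 3, a 1 + a 2 + a 3})
    (hQ3 : Q3 = {a 0, a 2, a 3, a 0 + (2 : ℝ) • a 1 + a 2 + a 3}) :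
    (Q1 ∪ Q2 ∪ Q3 = Φplus) ∧
    Disjoint Q1 Q2 ∧ Disjoint Q1 Q3 ∧ Disjoint Q2 Q3 ∧
    (∀ Q ∈ ({Q1, Q2, Q3} : Set (Set V)), ∀ x ∈ Q, ∀ y ∈ Q, x ≠ y → ⟪x, y⟫ = (0 : ℝ)) ∧
    (∀ b1 b2 b3 b4 : V, b1 ∈ Φplus → b2 ∈ Φplus → b3 ∈ Φplus → b4 ∈ Φplus →
      b1 ≠ b2 → b1 ≠ b3 → b1 ≠ b4 → b2 ≠ b3 → b2 ≠ b4 → b3 ≠ b4 →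
      (∀ x ∈ ({b1, b2, b3, b4} : Set V), ∀ y ∈ ({b1, b2, b3, b4} : Set V),
        x ≠ y → ⟪x, y⟫ = (0 : ℝ)) →
      (({b1, b2, b3, b4} : Set V) = Q1 ∨ ({b1, b2, b3, b4} : Set V) = Q2 ∨
        ({b1, b2, b3, b4} : Set V) = Q3)) := by
  -- the Gram matrix of the simple roots
  have h00 := hnorm 0; have h11 := hnorm 1; have h22 := hnorm 2; have h33 := hnorm 3
  have h10 := hbranch 0 (by decide); have h12 := hbranch 2 (by decide)
  have h13 := hbranch 3 (by decide)
  have h01 : ⟪a 0, a 1⟫ = (-1 : ℝ) := by rw [real_inner_comm]; exact h10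
  have h21 : ⟪a 2, a 1⟫ = (-1 : ℝ) := by rw [real_inner_comm]; exact h12
  have h31 : ⟪a 3, a 1⟫ = (-1 : ℝ) := by rw [real_inner_comm]; exact h13
  have h02 := hleaf 0 2 (by decide) (by decide) (by decide)
  have h20 := hleaf 2 0 (by decide) (by decide) (by decide)
  have h03 := hleaf 0 3 (by decide) (by decide) (by decide)
  have h30 := hleaf 3 0 (by decide) (by decide) (by decide)
  have h23 := hleaf 2 3 (by decide) (by decide) (by decide)
  have h32 := hleaf 3 2 (by decide) (by decide) (by decide)
  have hA : ∀ i j : Fin 4, ⟪a i, a j⟫ = (gA i j : ℝ) := by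
    intro i j
    fin_cases i <;> fin_cases j <;>
      simp [gA, h00, h01, h02, h03, h10, h11, h12, h13, h20, h21, h22, h23,
        h30, h31, h32, h33, -inner_self_eq_norm_sq_to_K]
  -- each positive root as a linear combination
  have hsum : ∀ k : Fin 12, rvec a k = ∑ i, (Cf k i : ℝ) • a i := by
    intro k
    fin_cases k <;>
      · show _ = _
        simp [rvec, Cf, Fin.sum_univ_four]
        try module
  -- the Gram matrix of the positive roots
  have hG : ∀ k l : Fin 12, ⟪rvec a k, rvec a l⟫ = (Gm k l : ℝ) := by
    intro k l
    rw [hsum k, hsum l]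
    rw [sum_inner]
    have e1 : ∀ i : Fin 4, ⟪(Cf k i : ℝ) • a i, ∑ j, (Cf l j : ℝ) • a j⟫ =
        ∑ j, (Cf k i : ℝ) * ((Cf l j : ℝ) * (gA i j : ℝ)) := by
      intro i
      rw [inner_sum]
      refine Finset.sum_congr rfl fun j _ => ?_
      rw [real_inner_smul_left, real_inner_smul_right, hA]
    simp_rw [e1]
    rw [Gm_eq_sum k l]
    push_cast
    ring
  have hG0 : ∀ k l : Fin 12, Gm k l = 0 → ⟪rvec a k, rvec a l⟫ = (0 : ℝ) := by
    intro k l h; rw [hG k l, h]; norm_num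
  -- distinct indices give distinct roots
  have hne : ∀ k l : Fin 12, k ≠ l → rvec a k ≠ rvec a l := by
    intro k l hkl he
    have h1 := hG k l
    rw [he, hG l l] at h1
    exact keyne k l hkl (by exact_mod_cast h1)
  -- restate the given sets in terms of `rvec`
  have hQ1r : Q1 = {rvec a 4, rvec a 5, rvec a 6, rvec a 10} := hQ1
  have hQ2r : Q2 = {rvec a 1, rvec a 7, rvec a 8, rvec a 9} := hQ2
  have hQ3r : Q3 = {rvec a 0, rvec a 2, rvec a 3, rvec a 11} := hQ3
  have hΦr : Φplus = {rvec a 0, rvec a 1, rvec a 2, rvec a 3, rvec a 4, rvec a 5,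
      rvec a 6, rvec a 7, rvec a 8, rvec a 9, rvec a 10, rvec a 11} := hΦplus
  have hidx : ∀ x, x ∈ Φplus → ∃ k : Fin 12, x = rvec a k := by
    intro x hx
    rw [hΦr] at hx
    simp only [Set.mem_insert_iff, Set.mem_singleton_iff] at hx
    rcases hx with h | h | h | h | h | h | h | h | h | h | h | h
    exacts [⟨0, h⟩, ⟨1, h⟩, ⟨2, h⟩, ⟨3, h⟩, ⟨4, h⟩, ⟨5, h⟩, ⟨6, h⟩, ⟨7, h⟩,
      ⟨8, h⟩, ⟨9, h⟩, ⟨10, h⟩, ⟨11, h⟩]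
  refine ⟨?_, ?_, ?_, ?_, ?_, ?_⟩
  · -- union
    rw [hQ1, hQ2, hQ3, hΦplus]
    ext x
    simp only [Set.mem_union, Set.mem_insert_iff, Set.mem_singleton_iff]
    tauto
  · -- Disjoint Q1 Q2
    rw [Set.disjoint_left]
    intro x hx hx'
    rw [hQ1r] at hx; rw [hQ2r] at hx'
    simp only [Set.mem_insert_iff, Set.mem_singleton_iff] at hx hx'
    rcases hx with rfl | rfl | rfl | rfl <;> rcases hx' with h | h | h | h <;>
      exact absurd h (hne _ _ (by decide))
  · -- Disjoint Q1 Q3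
    rw [Set.disjoint_left]
    intro x hx hx'
    rw [hQ1r] at hx; rw [hQ3r] at hx'
    simp only [Set.mem_insert_iff, Set.mem_singleton_iff] at hx hx'
    rcases hx with rfl | rfl | rfl | rfl <;> rcases hx' with h | h | h | h <;>
      exact absurd h (hne _ _ (by decide))
  · -- Disjoint Q2 Q3
    rw [Set.disjoint_left]
    intro x hx hx'
    rw [hQ2r] at hx; rw [hQ3r] at hx'
    simp only [Set.mem_insert_iff, Set.mem_singleton_iff] at hx hx'
    rcases hx with rfl | rfl | rfl | rfl <;> rcases hx' with h | h | h | h <;>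
      exact absurd h (hne _ _ (by decide))
  · -- orthogonality within each quadruple
    intro Q hQ x hx y hy hxy
    simp only [Set.mem_insert_iff, Set.mem_singleton_iff] at hQ
    rcases hQ with rfl | rfl | rfl
    · rw [hQ1r] at hx hy
      simp only [Set.mem_insert_iff, Set.mem_singleton_iff] at hx hy
      rcases hx with rfl | rfl | rfl | rfl <;> rcases hy with rfl | rfl | rfl | rfl <;>
        first
          | exact absurd rfl hxy
          | exact hG0 _ _ (by decide)
    · rw [hQ2r] at hx hy
      simp only [Set.mem_insert_iff, Set.mem_singleton_iff] at hx hy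
      rcases hx with rfl | rfl | rfl | rfl <;> rcases hy with rfl | rfl | rfl | rfl <;>
        first
          | exact absurd rfl hxy
          | exact hG0 _ _ (by decide)
    · rw [hQ3r] at hx hy
      simp only [Set.mem_insert_iff, Set.mem_singleton_iff] at hx hy
      rcases hx with rfl | rfl | rfl | rfl <;> rcases hy with rfl | rfl | rfl | rfl <;>
        first
          | exact absurd rfl hxy
          | exact hG0 _ _ (by decide)
  · -- uniqueness
    intro b1 b2 b3 b4 hb1 hb2 hb3 hb4 n12 n13 n14 n23 n24 n34 hperp
    obtain ⟨i1, rfl⟩ := hidx b1 hb1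
    obtain ⟨i2, rfl⟩ := hidx b2 hb2
    obtain ⟨i3, rfl⟩ := hidx b3 hb3
    obtain ⟨i4, rfl⟩ := hidx b4 hb4
    have d12 : i1 ≠ i2 := fun h => n12 (by rw [h])
    have d13 : i1 ≠ i3 := fun h => n13 (by rw [h])
    have d14 : i1 ≠ i4 := fun h => n14 (by rw [h])
    have d23 : i2 ≠ i3 := fun h => n23 (by rw [h])
    have d24 : i2 ≠ i4 := fun h => n24 (by rw [h])
    have d34 : i3 ≠ i4 := fun h => n34 (by rw [h])
    have o12 : Gm i1 i2 = 0 := by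
      have := hperp _ (by simp) _ (by simp) n12
      rw [hG] at this; exact_mod_cast this
    have o13 : Gm i1 i3 = 0 := by
      have := hperp (rvec a i1) (by simp) (rvec a i3) (by simp) n13
      rw [hG] at this; exact_mod_cast this
    have o14 : Gm i1 i4 = 0 := by
      have := hperp (rvec a i1) (by simp) (rvec a i4) (by simp) n14
      rw [hG] at this; exact_mod_cast this
    have o23 : Gm i2 i3 = 0 := by
      have := hperp (rvec a i2) (by simp) (rvec a i3) (by simp) n23
      rw [hG] at this; exact_mod_cast this
    have o24 : Gm i2 i4 = 0 := by
      have := hperp (rvec a i2) (by simp) (rvec a i4) (by simp) n24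
      rw [hG] at this; exact_mod_cast this
    have o34 : Gm i3 i4 = 0 := by
      have := hperp (rvec a i3) (by simp) (rvec a i4) (by simp) n34
      rw [hG] at this; exact_mod_cast this
    rcases key i1 i2 i3 i4 d12 d13 d14 d23 d24 d34 o12 o13 o14 o23 o24 o34 with h | h | h
    · left
      have h2 := congrArg (fun s : Finset (Fin 12) => rvec a '' (s : Set (Fin 12))) h
      simp only [Finset.coe_insert, Finset.coe_singleton, Set.image_insert_eq,
        Set.image_singleton] at h2
      rw [hQ1r]; exact h2
    · right; left
      have h2 := congrArg (fun s : Finset (Fin 12) => rvec a '' (s : Set (Fin 12))) h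
      simp only [Finset.coe_insert, Finset.coe_singleton, Set.image_insert_eq,
        Set.image_singleton] at h2
      rw [hQ2r]; exact h2
    · right; right
      have h2 := congrArg (fun s : Finset (Fin 12) => rvec a '' (s : Set (Fin 12))) h
      simp only [Finset.coe_insert, Finset.coe_singleton, Set.image_insert_eq,
        Set.image_singleton] at h2
      rw [hQ3r]; exact h2
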